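/- arXiv:2403.03540 — 5 statements merged into one kernel-verified Lean document; each statement's English description precedes it below -/
import Mathlib

section
/- For Gaussian regression densities P_f, P_g with noise standard deviation σ and functions f, g uniformly bounded by Q, the Hellinger distance satisfies h²(P_f, P_g) ≥ (1/(4σ²)) · exp(−Q²/(2σ²)) · ‖f − g‖_{L²(G)}². -/
open MeasureTheory Real

/-- The density of a univariate Gaussian with mean `m` and standard deviation `σ`. -/
noncomputable def gaussDensity (m σ y : ℝ) : ℝ :=
  (σ * Real.sqrt (2 * π))⁻¹ * Real.exp (-(y - m) ^ 2 / (2 * σ ^ 2))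

lemma gaussDensity_eq {σ : ℝ} (hσ : 0 < σ) (m : ℝ) :
    gaussDensity m σ = ProbabilityTheory.gaussianPDFReal m ⟨σ^2, sq_nonneg σ⟩ := by
  ext y
  simp only [gaussDensity, ProbabilityTheory.gaussianPDFReal, NNReal.coe_mk]
  congr 2
  change σ * √(2 * π) = √(2 * π * σ^2)
  rw [show 2*π*σ^2 = σ^2*(2*π) by ring, Real.sqrt_mul (sq_nonneg σ), Real.sqrt_sq hσ.le]

lemma gaussDensity_nonneg {σ : ℝ} (hσ : 0 < σ) (m y : ℝ) : 0 ≤ gaussDensity m σ y :=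
  mul_nonneg (inv_nonneg.mpr (mul_nonneg hσ.le (Real.sqrt_nonneg _))) (Real.exp_pos _).le

lemma integrable_gaussDensity {σ : ℝ} (hσ : 0 < σ) (m : ℝ) :
    Integrable (gaussDensity m σ) := by
  rw [gaussDensity_eq hσ]; exact ProbabilityTheory.integrable_gaussianPDFReal m _

lemma integral_gaussDensity {σ : ℝ} (hσ : 0 < σ) (m : ℝ) : ∫ y, gaussDensity m σ y = 1 := by
  rw [gaussDensity_eq hσ]
  refine ProbabilityTheory.integral_gaussianPDFReal_eq_one m ?_
  intro h
  exact (pow_pos hσ 2).ne' (by have h' := congrArg NNReal.toReal h; rw [NNReal.coe_zero] at h'; exact h')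

lemma sqrt_gauss_mul {σ : ℝ} (hσ : 0 < σ) (m₁ m₂ y : ℝ) :
    Real.sqrt (gaussDensity m₁ σ y * gaussDensity m₂ σ y)
      = Real.exp (-(m₁ - m₂)^2 / (8 * σ^2)) * gaussDensity ((m₁+m₂)/2) σ y := by
  have hc : 0 ≤ (σ * Real.sqrt (2*π))⁻¹ :=
    inv_nonneg.mpr (mul_nonneg hσ.le (Real.sqrt_nonneg _))
  have hσ2 : (σ:ℝ)^2 ≠ 0 := (pow_pos hσ 2).ne'
  simp only [gaussDensity]
  rw [show (σ * Real.sqrt (2 * π))⁻¹ * rexp (-(y - m₁) ^ 2 / (2 * σ ^ 2)) *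
        ((σ * Real.sqrt (2 * π))⁻¹ * rexp (-(y - m₂) ^ 2 / (2 * σ ^ 2)))
      = ((σ * Real.sqrt (2 * π))⁻¹)^2 *
        rexp (-(y - m₁) ^ 2 / (2 * σ ^ 2) + -(y - m₂) ^ 2 / (2 * σ ^ 2)) by
      rw [Real.exp_add]; ring]
  rw [Real.sqrt_mul (sq_nonneg _), Real.sqrt_sq hc, ← Real.exp_half]
  rw [show rexp (-(m₁ - m₂) ^ 2 / (8 * σ ^ 2)) * ((σ * √(2 * π))⁻¹ * rexp (-(y - (m₁ + m₂) / 2) ^ 2 / (2 * σ ^ 2)))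
      = (σ * √(2 * π))⁻¹ * rexp (-(m₁ - m₂) ^ 2 / (8 * σ ^ 2) + -(y - (m₁ + m₂) / 2) ^ 2 / (2 * σ ^ 2)) by
    rw [Real.exp_add]; ring]
  congr 1
  field_simp
  ring

lemma sq_diff_sqrt_gauss {σ : ℝ} (hσ : 0 < σ) (m₁ m₂ : ℝ) :
    (fun y => (Real.sqrt (gaussDensity m₁ σ y) - Real.sqrt (gaussDensity m₂ σ y))^2)
      = fun y => gaussDensity m₁ σ y + gaussDensity m₂ σ y
          - 2 * (Real.exp (-(m₁ - m₂)^2 / (8 * σ^2)) * gaussDensity ((m₁+m₂)/2) σ y) := by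
  funext y
  rw [sub_sq, Real.sq_sqrt (gaussDensity_nonneg hσ m₁ y), Real.sq_sqrt (gaussDensity_nonneg hσ m₂ y),
    mul_assoc, ← Real.sqrt_mul (gaussDensity_nonneg hσ m₁ y), sqrt_gauss_mul hσ]
  ring

lemma integrable_sq_diff_sqrt_gauss {σ : ℝ} (hσ : 0 < σ) (m₁ m₂ : ℝ) :
    Integrable (fun y => (Real.sqrt (gaussDensity m₁ σ y) - Real.sqrt (gaussDensity m₂ σ y))^2) := by
  rw [sq_diff_sqrt_gauss hσ]
  exact ((integrable_gaussDensity hσ m₁).add (integrable_gaussDensity hσ m₂)).sub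
    (((integrable_gaussDensity hσ _).const_mul _).const_mul 2)

lemma integral_sq_diff_sqrt_gauss {σ : ℝ} (hσ : 0 < σ) (m₁ m₂ : ℝ) :
    ∫ y, (Real.sqrt (gaussDensity m₁ σ y) - Real.sqrt (gaussDensity m₂ σ y))^2
      = 2 - 2 * Real.exp (-(m₁ - m₂)^2 / (8 * σ^2)) := by
  have h1 : Integrable (fun y => gaussDensity m₁ σ y + gaussDensity m₂ σ y) :=
    (integrable_gaussDensity hσ m₁).add (integrable_gaussDensity hσ m₂)
  have h2 : Integrable (fun y =>
      2 * (Real.exp (-(m₁ - m₂)^2 / (8 * σ^2)) * gaussDensity ((m₁+m₂)/2) σ y)) :=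
    ((integrable_gaussDensity hσ _).const_mul _).const_mul 2
  have h3 : Integrable (gaussDensity m₁ σ) := integrable_gaussDensity hσ m₁
  have h4 : Integrable (gaussDensity m₂ σ) := integrable_gaussDensity hσ m₂
  rw [sq_diff_sqrt_gauss hσ]
  rw [integral_sub h1 h2, integral_add h3 h4,
    MeasureTheory.integral_const_mul, MeasureTheory.integral_const_mul, integral_gaussDensity hσ, integral_gaussDensity hσ,
    integral_gaussDensity hσ]
  ring

lemma key_ineq {u U : ℝ} (hu : 0 ≤ u) (huU : u ≤ U) :
    u * Real.exp (-U) ≤ 1 - Real.exp (-u) := by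
  have h1 : u * rexp (-U) ≤ u * rexp (-u) :=
    mul_le_mul_of_nonneg_left (Real.exp_le_exp.mpr (by linarith)) hu
  have h2 : 1 + u ≤ rexp u := by linarith [Real.add_one_le_exp u]
  have h3 : rexp (-u) * rexp u = 1 := by rw [← Real.exp_add]; simp
  nlinarith [Real.exp_pos (-u), Real.exp_pos u]

-- domination of gaussDensity for bounded mean
lemma gaussDensity_le {σ Q m : ℝ} (hσ : 0 < σ) (hm : |m| ≤ Q) (y : ℝ) :
    gaussDensity m σ y ≤ (σ * Real.sqrt (2 * π))⁻¹ * Real.exp (Q^2 / (2 * σ^2)) *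
      Real.exp (-(1/(4*σ^2)) * y^2) := by
  have hc : 0 ≤ (σ * Real.sqrt (2*π))⁻¹ :=
    inv_nonneg.mpr (mul_nonneg hσ.le (Real.sqrt_nonneg _))
  rw [gaussDensity, mul_assoc, ← Real.exp_add]
  refine mul_le_mul_of_nonneg_left (Real.exp_le_exp.mpr ?_) hc
  have hm2 : m^2 ≤ Q^2 := sq_le_sq' (by linarith [abs_le.mp hm]) (abs_le.mp hm).2
  rw [show Q^2/(2*σ^2) + (-(1/(4*σ^2)) * y^2) = (2*Q^2 - y^2)/(4*σ^2) by field_simp; ring,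
    show -(y-m)^2/(2*σ^2) = (-2*(y-m)^2)/(4*σ^2) by field_simp; ring,
    div_le_div_iff_of_pos_right (by positivity)]
  nlinarith [sq_nonneg (y - 2*m)]

/-- for Gaussian regression densities with `‖f‖_∞ ≤ Q` and `‖g‖_∞ ≤ Q`,
`h²(P_f, P_g) ≥ (1/(4σ²)) · exp(−Q²/(2σ²)) · ‖f − g‖²_{L²(G)}`. -/
theorem hellinger_sq_gaussian_regression_ge
    {X : Type*} [MeasurableSpace X] (μ : Measure X) [SigmaFinite μ]
    (G f g : X → ℝ) (σ Q : ℝ) (hσ : 0 < σ) (hQ : 0 < Q)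
    (hG : Measurable G) (hGnn : ∀ x, 0 ≤ G x) (hGint : ∫ x, G x ∂μ = 1)
    (hf : Measurable f) (hg : Measurable g)
    (hfQ : ∀ x, |f x| ≤ Q) (hgQ : ∀ x, |g x| ≤ Q) :
    (1 / (4 * σ ^ 2)) * Real.exp (-(Q ^ 2) / (2 * σ ^ 2)) *
        ∫ x, (f x - g x) ^ 2 * G x ∂μ
      ≤ ∫ p : X × ℝ,
          (Real.sqrt (G p.1 * gaussDensity (f p.1) σ p.2) -
            Real.sqrt (G p.1 * gaussDensity (g p.1) σ p.2)) ^ 2 ∂(μ.prod volume) := by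
  -- G is integrable
  have hGi : Integrable G μ := by
    by_contra h
    rw [integral_undef h] at hGint
    norm_num at hGint
  set F : X × ℝ → ℝ := fun p =>
    (Real.sqrt (G p.1 * gaussDensity (f p.1) σ p.2) -
      Real.sqrt (G p.1 * gaussDensity (g p.1) σ p.2)) ^ 2 with hF_def
  -- factor G out
  have hF_eq : ∀ p : X × ℝ, F p = G p.1 *
      (Real.sqrt (gaussDensity (f p.1) σ p.2) - Real.sqrt (gaussDensity (g p.1) σ p.2))^2 := by
    intro p
    rw [hF_def]
    simp only
    rw [Real.sqrt_mul (hGnn p.1), Real.sqrt_mul (hGnn p.1), ← mul_sub, mul_pow,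
      Real.sq_sqrt (hGnn p.1)]
  -- measurability of F
  have hFm : Measurable F := by
    simp only [hF_def, gaussDensity]
    fun_prop
  -- domination
  set C : ℝ := (σ * Real.sqrt (2 * π))⁻¹ * Real.exp (Q^2 / (2 * σ^2)) with hC
  have hC0 : 0 ≤ C := by positivity
  have hFle : ∀ p : X × ℝ, F p ≤ G p.1 * (2 * C * Real.exp (-(1/(4*σ^2)) * p.2^2)) := by
    intro p
    rw [hF_eq p]
    refine mul_le_mul_of_nonneg_left ?_ (hGnn p.1)
    have e1 := gaussDensity_nonneg hσ (f p.1) p.2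
    have e2 := gaussDensity_nonneg hσ (g p.1) p.2
    have hb : (Real.sqrt (gaussDensity (f p.1) σ p.2) - Real.sqrt (gaussDensity (g p.1) σ p.2))^2
        ≤ gaussDensity (f p.1) σ p.2 + gaussDensity (g p.1) σ p.2 := by
      have := Real.sqrt_nonneg (gaussDensity (f p.1) σ p.2)
      have := Real.sqrt_nonneg (gaussDensity (g p.1) σ p.2)
      nlinarith [Real.sq_sqrt e1, Real.sq_sqrt e2]
    refine hb.trans ?_
    have := gaussDensity_le hσ (hfQ p.1) p.2
    have := gaussDensity_le hσ (hgQ p.1) p.2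
    rw [hC]; nlinarith
  -- the dominating function is integrable on the product
  have hDi : Integrable (fun p : X × ℝ => G p.1 * (2 * C * Real.exp (-(1/(4*σ^2)) * p.2^2)))
      (μ.prod volume) :=
    hGi.mul_prod ((integrable_exp_neg_mul_sq (by positivity)).const_mul (2*C))
  have hFnn : ∀ p, 0 ≤ F p := fun p => sq_nonneg _
  have hFi : Integrable F (μ.prod volume) := by
    refine hDi.mono' hFm.aestronglyMeasurable (ae_of_all _ fun p => ?_)
    rw [Real.norm_of_nonneg (hFnn p)]
    exact hFle p
  -- Fubini
  rw [show (∫ p : X × ℝ,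
          (Real.sqrt (G p.1 * gaussDensity (f p.1) σ p.2) -
            Real.sqrt (G p.1 * gaussDensity (g p.1) σ p.2)) ^ 2 ∂(μ.prod volume)) =
      ∫ x, ∫ y, F (x, y) ∂volume ∂μ from MeasureTheory.integral_prod F hFi]
  -- inner integral
  have hinner : ∀ x, ∫ y, F (x, y) =
      G x * (2 - 2 * Real.exp (-(f x - g x)^2 / (8 * σ^2))) := by
    intro x
    simp only [hF_eq]
    rw [MeasureTheory.integral_const_mul, integral_sq_diff_sqrt_gauss hσ]
  -- LHS as an integral
  rw [← MeasureTheory.integral_const_mul]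
  set c : ℝ := 1 / (4 * σ ^ 2) * rexp (-Q ^ 2 / (2 * σ ^ 2)) with hc
  have hc0 : 0 ≤ c := by positivity
  -- integrability of both sides
  have hLi : Integrable (fun x => c * ((f x - g x) ^ 2 * G x)) μ := by
    refine (hGi.const_mul (c * (2*Q)^2)).mono'
      ((((hf.sub hg).pow_const 2).mul hG).const_mul c).aestronglyMeasurable
      (ae_of_all _ fun x => ?_)
    have ha := abs_le.mp (hfQ x)
    have hb := abs_le.mp (hgQ x)
    have h1 : (f x - g x)^2 ≤ (2*Q)^2 := by nlinarith
    have hGx := hGnn x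
    rw [Real.norm_of_nonneg (mul_nonneg hc0 (mul_nonneg (sq_nonneg _) hGx))]
    nlinarith [mul_nonneg (mul_nonneg hc0 hGx) (sub_nonneg.mpr h1)]
  refine integral_mono hLi hFi.integral_prod_left fun x => ?_
  rw [hinner x]
  -- pointwise inequality
  have hu : 0 ≤ (f x - g x)^2 / (8 * σ^2) := by positivity
  have huU : (f x - g x)^2 / (8 * σ^2) ≤ Q^2 / (2 * σ^2) := by
    have ha := abs_le.mp (hfQ x)
    have hb := abs_le.mp (hgQ x)
    have h1 : (f x - g x)^2 ≤ 4*Q^2 := by nlinarith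
    rw [div_le_div_iff₀ (by positivity) (by positivity)]
    nlinarith [sq_nonneg σ]
  have hk := key_ineq hu huU
  have hGx := hGnn x
  rw [hc]
  have hre : rexp (-(f x - g x)^2 / (8 * σ^2)) = rexp (-((f x - g x)^2 / (8 * σ^2))) := by
    rw [neg_div]
  have hre2 : rexp (-Q ^ 2 / (2 * σ ^ 2)) = rexp (-(Q^2 / (2 * σ^2))) := by rw [neg_div]
  rw [hre, hre2]
  have key : 1/(4*σ^2) * rexp (-(Q^2/(2*σ^2))) * ((f x - g x)^2 * G x)
      = 2 * G x * ((f x - g x)^2/(8*σ^2) * rexp (-(Q^2/(2*σ^2)))) := by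
    field_simp; ring
  rw [key]
  calc 2 * G x * ((f x - g x)^2/(8*σ^2) * rexp (-(Q^2/(2*σ^2))))
      ≤ 2 * G x * (1 - rexp (-((f x - g x)^2/(8*σ^2)))) :=
        mul_le_mul_of_nonneg_left hk (by positivity)
    _ = G x * (2 - 2 * rexp (-((f x - g x)^2/(8*σ^2)))) := by ring
end

section
/- Let S, S' be two k-dimensional linear subspaces of R^d. Then the directional Hausdorff distance is symmetric on their unit-sphere intersections: sup_{x ∈ S ∩ S_d} dist(x, S' ∩ S_d) = sup_{y ∈ S' ∩ S_d} dist(y, S ∩ S_d), where S_d is the unit sphere of R^d. -/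
open Metric Real Module

local notation "⟪" x ", " y "⟫" => @inner ℝ _ _ x y

section Aux

variable {V W : Type*}
  [NormedAddCommGroup V] [InnerProductSpace ℝ V] [FiniteDimensional ℝ V]
  [NormedAddCommGroup W] [InnerProductSpace ℝ W] [FiniteDimensional ℝ W]

/-- If `x₀` minimises `‖A x‖` on the unit sphere of `V`, and `dim V = dim W`, then there is a
unit vector `y` of `W` with `‖A† y‖ ≤ ‖A x₀‖`. -/
lemma adjoint_min_le (hd : finrank ℝ V = finrank ℝ W) (A : V →L[ℝ] W)
    (x₀ : V) (hx₀ : ‖x₀‖ = 1)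
    (hmin : ∀ x : V, ‖x‖ = 1 → ‖A x₀‖ ≤ ‖A x‖) :
    ∃ y : W, ‖y‖ = 1 ∧ ‖ContinuousLinearMap.adjoint A y‖ ≤ ‖A x₀‖ := by
  by_cases h0 : A x₀ = 0
  · -- kernel case: `A` is not injective, hence `A†` is not injective either
    have hker : LinearMap.ker (A : V →ₗ[ℝ] W) ≠ ⊥ := by
      rw [Submodule.ne_bot_iff]
      exact ⟨x₀, by simpa [LinearMap.mem_ker] using h0, by intro h; simp [h] at hx₀⟩
    have hkerpos : 0 < finrank ℝ (LinearMap.ker (A : V →ₗ[ℝ] W)) := by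
      rcases Nat.eq_zero_or_pos (finrank ℝ (LinearMap.ker (A : V →ₗ[ℝ] W))) with h | h
      · exact absurd (Submodule.finrank_eq_zero.mp h) hker
      · exact h
    have hrank := LinearMap.finrank_range_add_finrank_ker (A : V →ₗ[ℝ] W)
    have hlt : finrank ℝ (LinearMap.range (A : V →ₗ[ℝ] W)) < finrank ℝ W := by omega
    have horth := Submodule.finrank_add_finrank_orthogonal
      (K := LinearMap.range (A : V →ₗ[ℝ] W)) (𝕜 := ℝ)
    have hne : (LinearMap.range (A : V →ₗ[ℝ] W))ᗮ ≠ ⊥ := by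
      intro h
      rw [h] at horth
      simp [finrank_bot] at horth
      omega
    obtain ⟨y₀, hy₀mem, hy₀ne⟩ := Submodule.ne_bot_iff _ |>.mp hne
    refine ⟨‖y₀‖⁻¹ • y₀, ?_, ?_⟩
    · simp [norm_smul, norm_ne_zero_iff.mpr hy₀ne, inv_mul_cancel₀]
    · have hy : ‖y₀‖⁻¹ • y₀ ∈ (LinearMap.range (A : V →ₗ[ℝ] W))ᗮ :=
        Submodule.smul_mem _ _ hy₀mem
      have hz : ContinuousLinearMap.adjoint A (‖y₀‖⁻¹ • y₀) = 0 := by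
        have h1 := hy (A (ContinuousLinearMap.adjoint A (‖y₀‖⁻¹ • y₀))) ⟨_, rfl⟩
        rw [← inner_self_eq_zero (𝕜 := ℝ) (x := ContinuousLinearMap.adjoint A (‖y₀‖⁻¹ • y₀))]
        rw [ContinuousLinearMap.adjoint_inner_left, real_inner_comm]
        exact h1
      rw [hz]
      simp
  · -- Rayleigh quotient case
    set m := ‖A x₀‖ with hm
    have hmpos : 0 < m := norm_pos_iff.mpr h0
    set T := ContinuousLinearMap.adjoint A ∘L A with hT
    have hsa : IsSelfAdjoint T := by
      rw [ContinuousLinearMap.isSelfAdjoint_iff']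
      simp [hT, ContinuousLinearMap.comp_assoc]
    have hre : ∀ x : V, T.reApplyInnerSelf x = ‖A x‖ ^ 2 := by
      intro x
      rw [ContinuousLinearMap.reApplyInnerSelf_apply]
      have := ContinuousLinearMap.apply_norm_sq_eq_inner_adjoint_left (𝕜 := ℝ) A x
      simpa [hT] using this.symm
    have hextr : IsMinOn T.reApplyInnerSelf (sphere (0 : V) ‖x₀‖) x₀ := by
      intro x hx
      have hx1 : ‖x‖ = 1 := by rwa [mem_sphere_zero_iff_norm, hx₀] at hx
      simp only [Set.mem_setOf_eq, hre]
      have := hmin x hx1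
      nlinarith [norm_nonneg (A x), norm_nonneg (A x₀)]
    have heig := hsa.eq_smul_self_of_isLocalExtrOn (Or.inl hextr.localize)
    have hray : T.rayleighQuotient x₀ = m ^ 2 := by
      rw [ContinuousLinearMap.rayleighQuotient, hre, hx₀]
      simp [hm]
    refine ⟨m⁻¹ • A x₀, ?_, ?_⟩
    · simp [norm_smul, abs_of_pos hmpos, inv_mul_cancel₀ hmpos.ne']
      exact inv_mul_cancel₀ hmpos.ne'
    · have hAy : ContinuousLinearMap.adjoint A (m⁻¹ • A x₀) = m⁻¹ • (m ^ 2 • x₀) := by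
        rw [map_smul]
        have hTx : ContinuousLinearMap.adjoint A (A x₀) = (m ^ 2 : ℝ) • x₀ := by
          have := heig
          rw [hray] at this
          simpa [hT] using this
        rw [hTx]
      rw [hAy, norm_smul, norm_smul, hx₀]
      simp only [mul_one, Real.norm_eq_abs]
      rw [abs_of_pos (inv_pos.mpr hmpos), abs_of_pos (pow_pos hmpos 2), pow_two]
      rw [← mul_assoc, inv_mul_cancel₀ hmpos.ne', one_mul]

variable {E : Type*} [NormedAddCommGroup E] [InnerProductSpace ℝ E] [FiniteDimensional ℝ E]

lemma unit_of_ne_bot (K : Submodule ℝ E) (hK : K ≠ ⊥) :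
    ∃ u : E, u ∈ K ∧ ‖u‖ = 1 := by
  obtain ⟨v, hv, hvne⟩ := (Submodule.ne_bot_iff K).mp hK
  exact ⟨‖v‖⁻¹ • v, K.smul_mem _ hv, by
    simp [norm_smul, inv_mul_cancel₀ (norm_ne_zero_iff.mpr hvne)]⟩

/-- The distance from a unit vector `x` to `K ∩ 𝕊` in terms of the orthogonal projection. -/
lemma infDist_sphere_eq (K : Submodule ℝ E) (hK : K ≠ ⊥) (x : E) (hx : ‖x‖ = 1) :
    Metric.infDist x ((K : Set E) ∩ sphere 0 1)
      = √(2 - 2 * ‖(Submodule.orthogonalProjectionOnto K x : E)‖) := by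
  obtain ⟨u, huK, hu1⟩ := unit_of_ne_bot K hK
  set p : E := (Submodule.orthogonalProjectionOnto K x : E) with hp
  have hinner : ∀ y ∈ K, ⟪x, y⟫ = ⟪p, y⟫ := by
    intro y hy
    have h0 : ⟪x - p, y⟫ = 0 := Submodule.starProjection_inner_eq_zero x y hy
    have := inner_sub_left (𝕜 := ℝ) x p y
    rw [h0] at this
    linarith [this]
  have hdist : ∀ y : E, ‖y‖ = 1 → dist x y = √(2 - 2 * ⟪x, y⟫) := by
    intro y hy
    have hsq : dist x y ^ 2 = 2 - 2 * ⟪x, y⟫ := by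
      rw [dist_eq_norm, norm_sub_sq_real, hx, hy]
      ring
    rw [← hsq, Real.sqrt_sq dist_nonneg]
  obtain ⟨y₀, hy₀K, hy₀1, hy₀inner⟩ :
      ∃ y₀ : E, y₀ ∈ K ∧ ‖y₀‖ = 1 ∧ ⟪x, y₀⟫ = ‖p‖ := by
    by_cases hp0 : p = 0
    · refine ⟨u, huK, hu1, ?_⟩
      rw [hinner u huK, hp0]
      simp
    · refine ⟨‖p‖⁻¹ • p, K.smul_mem _ (Submodule.orthogonalProjectionOnto K x).2, ?_, ?_⟩
      · simp [norm_smul, inv_mul_cancel₀ (norm_ne_zero_iff.mpr hp0)]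
      · rw [real_inner_smul_right, hinner p (Submodule.orthogonalProjectionOnto K x).2,
          real_inner_self_eq_norm_sq]
        rw [pow_two, ← mul_assoc, inv_mul_cancel₀ (norm_ne_zero_iff.mpr hp0), one_mul]
  have hbound : ∀ y ∈ K, ‖y‖ = 1 → ⟪x, y⟫ ≤ ‖p‖ := by
    intro y hy hy1
    rw [hinner y hy]
    calc ⟪p, y⟫ ≤ ‖p‖ * ‖y‖ := real_inner_le_norm p y
    _ = ‖p‖ := by rw [hy1, mul_one]
  refine le_antisymm ?_ ?_
  · have hmem : y₀ ∈ (K : Set E) ∩ sphere 0 1 :=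
      ⟨hy₀K, by simpa [mem_sphere_zero_iff_norm] using hy₀1⟩
    calc Metric.infDist x ((K : Set E) ∩ sphere 0 1) ≤ dist x y₀ :=
        Metric.infDist_le_dist_of_mem hmem
    _ = √(2 - 2 * ‖p‖) := by rw [hdist y₀ hy₀1, hy₀inner]
  · rw [Metric.infDist_eq_iInf]
    have hne : Nonempty ((K : Set E) ∩ sphere 0 1 : Set E) :=
      ⟨⟨y₀, hy₀K, by simpa [mem_sphere_zero_iff_norm] using hy₀1⟩⟩
    refine le_ciInf fun y => ?_
    have hy1 : ‖(y : E)‖ = 1 := by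
      have := y.2.2
      simpa [mem_sphere_zero_iff_norm] using this
    rw [hdist y hy1]
    exact Real.sqrt_le_sqrt (by linarith [hbound (y : E) y.2.1 hy1])

/-- The directional Hausdorff distance as a function of the minimal projection norm. -/
lemma sup_infDist_eq (S S' : Submodule ℝ E) (hS'ne : S' ≠ ⊥) (x₀ : E)
    (hx₀ : x₀ ∈ (S : Set E) ∩ sphere 0 1)
    (hmin : ∀ x ∈ (S : Set E) ∩ sphere 0 1,
      ‖(Submodule.orthogonalProjectionOnto S' x₀ : E)‖ ≤ ‖(Submodule.orthogonalProjectionOnto S' x : E)‖) :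
    (⨆ x : ((S : Set E) ∩ sphere 0 1 : Set E),
        Metric.infDist (x : E) ((S' : Set E) ∩ sphere 0 1))
      = √(2 - 2 * ‖(Submodule.orthogonalProjectionOnto S' x₀ : E)‖) := by
  haveI : Nonempty ((S : Set E) ∩ sphere 0 1 : Set E) := ⟨⟨x₀, hx₀⟩⟩
  have hnorm : ∀ x : ((S : Set E) ∩ sphere 0 1 : Set E), ‖(x : E)‖ = 1 := fun x => by
    have := x.2.2
    simpa [mem_sphere_zero_iff_norm] using this
  have hval : ∀ x : ((S : Set E) ∩ sphere 0 1 : Set E),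
      Metric.infDist (x : E) ((S' : Set E) ∩ sphere 0 1)
        = √(2 - 2 * ‖(Submodule.orthogonalProjectionOnto S' (x : E) : E)‖) :=
    fun x => infDist_sphere_eq S' hS'ne (x : E) (hnorm x)
  refine le_antisymm ?_ ?_
  · refine ciSup_le fun x => ?_
    rw [hval x]
    exact Real.sqrt_le_sqrt (by linarith [hmin (x : E) x.2])
  · have hbdd : BddAbove (Set.range fun x : ((S : Set E) ∩ sphere 0 1 : Set E) =>
        Metric.infDist (x : E) ((S' : Set E) ∩ sphere 0 1)) := by
      refine ⟨√2, ?_⟩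
      rintro a ⟨x, rfl⟩
      simp only []
      rw [hval x]
      exact Real.sqrt_le_sqrt
        (by linarith [norm_nonneg ((Submodule.orthogonalProjectionOnto S' (x : E) : E))])
    have h := le_ciSup hbdd (⟨x₀, hx₀⟩ : ((S : Set E) ∩ sphere 0 1 : Set E))
    rwa [hval ⟨x₀, hx₀⟩] at h

end Aux

/-- for two `k`-dimensional subspaces `S, S'` of `ℝ^d` (`k ≥ 1`), the
directional Hausdorff distance between their unit-sphere intersections is symmetric:
`sup_{x ∈ S ∩ 𝕊} dist(x, S' ∩ 𝕊) = sup_{y ∈ S' ∩ 𝕊} dist(y, S ∩ 𝕊)`. -/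
theorem directional_hausdorff_symmetric
    (d k : ℕ) (hk : 1 ≤ k)
    (S S' : Submodule ℝ (EuclideanSpace ℝ (Fin d)))
    (hS : Module.finrank ℝ S = k) (hS' : Module.finrank ℝ S' = k) :
    (⨆ x : ((S : Set (EuclideanSpace ℝ (Fin d))) ∩ Metric.sphere 0 1 : Set (EuclideanSpace ℝ (Fin d))),
        Metric.infDist (x : EuclideanSpace ℝ (Fin d))
          ((S' : Set (EuclideanSpace ℝ (Fin d))) ∩ Metric.sphere 0 1))
      = ⨆ y : ((S' : Set (EuclideanSpace ℝ (Fin d))) ∩ Metric.sphere 0 1 : Set (EuclideanSpace ℝ (Fin d))),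
          Metric.infDist (y : EuclideanSpace ℝ (Fin d))
            ((S : Set (EuclideanSpace ℝ (Fin d))) ∩ Metric.sphere 0 1) := by
  set E := EuclideanSpace ℝ (Fin d) with hE
  have hSne : S ≠ ⊥ := by
    intro h
    rw [h, finrank_bot] at hS
    omega
  have hS'ne : S' ≠ ⊥ := by
    intro h
    rw [h, finrank_bot] at hS'
    omega
  -- the two intersections with the sphere, with minimizers of the projection norms
  have hCcpt : IsCompact ((S : Set E) ∩ sphere 0 1) :=
    (isCompact_sphere (0 : E) 1).inter_left S.closed_of_finiteDimensional
  have hC'cpt : IsCompact ((S' : Set E) ∩ sphere 0 1) :=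
    (isCompact_sphere (0 : E) 1).inter_left S'.closed_of_finiteDimensional
  obtain ⟨u, huS, hu1⟩ := unit_of_ne_bot S hSne
  obtain ⟨u', huS', hu'1⟩ := unit_of_ne_bot S' hS'ne
  have hCne : ((S : Set E) ∩ sphere 0 1).Nonempty :=
    ⟨u, huS, by simpa [mem_sphere_zero_iff_norm] using hu1⟩
  have hC'ne : ((S' : Set E) ∩ sphere 0 1).Nonempty :=
    ⟨u', huS', by simpa [mem_sphere_zero_iff_norm] using hu'1⟩
  have hfc : Continuous fun x : E => ‖(Submodule.orthogonalProjectionOnto S' x : E)‖ :=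
    (continuous_subtype_val.comp (Submodule.orthogonalProjectionOnto S').continuous).norm
  have hgc : Continuous fun x : E => ‖(Submodule.orthogonalProjectionOnto S x : E)‖ :=
    (continuous_subtype_val.comp (Submodule.orthogonalProjectionOnto S).continuous).norm
  obtain ⟨x₀, hx₀C, hx₀min⟩ := hCcpt.exists_isMinOn hCne hfc.continuousOn
  obtain ⟨y₀, hy₀C, hy₀min⟩ := hC'cpt.exists_isMinOn hC'ne hgc.continuousOn
  -- the two restricted projections, adjoint to each other
  set A : S →L[ℝ] S' := (Submodule.orthogonalProjectionOnto S') ∘L S.subtypeL with hA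
  set B : S' →L[ℝ] S := (Submodule.orthogonalProjectionOnto S) ∘L S'.subtypeL with hB
  have hadj : B = ContinuousLinearMap.adjoint A := by
    rw [ContinuousLinearMap.eq_adjoint_iff]
    intro y x
    simp [hA, hB]
  have hAx : ∀ x : S, ‖A x‖ = ‖(Submodule.orthogonalProjectionOnto S' (x : E) : E)‖ := by
    intro x
    rw [hA]
    rfl
  have hBy : ∀ y : S', ‖B y‖ = ‖(Submodule.orthogonalProjectionOnto S (y : E) : E)‖ := by
    intro y
    rw [hB]
    rfl
  have hdim : finrank ℝ S = finrank ℝ S' := by rw [hS, hS']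
  have hcoe : ∀ x : S, ‖(x : E)‖ = ‖x‖ := fun x => rfl
  have hcoe' : ∀ y : S', ‖(y : E)‖ = ‖y‖ := fun y => rfl
  -- transfer minimality to the subtype spheres
  have hx₀1 : ‖(⟨x₀, hx₀C.1⟩ : S)‖ = 1 := by
    have := hx₀C.2
    rw [← hcoe]
    simpa [mem_sphere_zero_iff_norm] using this
  have hy₀1 : ‖(⟨y₀, hy₀C.1⟩ : S')‖ = 1 := by
    have := hy₀C.2
    rw [← hcoe']
    simpa [mem_sphere_zero_iff_norm] using this
  have hminA : ∀ x : S, ‖x‖ = 1 → ‖A ⟨x₀, hx₀C.1⟩‖ ≤ ‖A x‖ := by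
    intro x hx1
    rw [hAx, hAx]
    exact hx₀min ⟨x.2, by rw [mem_sphere_zero_iff_norm, hcoe]; exact hx1⟩
  have hminB : ∀ y : S', ‖y‖ = 1 → ‖B ⟨y₀, hy₀C.1⟩‖ ≤ ‖B y‖ := by
    intro y hy1
    rw [hBy, hBy]
    exact hy₀min ⟨y.2, by rw [mem_sphere_zero_iff_norm, hcoe']; exact hy1⟩
  obtain ⟨y, hy1A, hyleA⟩ := adjoint_min_le hdim A ⟨x₀, hx₀C.1⟩ hx₀1 hminA
  obtain ⟨x, hx1B, hxleB⟩ := adjoint_min_le hdim.symm B ⟨y₀, hy₀C.1⟩ hy₀1 hminB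
  have hadj' : ContinuousLinearMap.adjoint B = A := by
    rw [hadj, ContinuousLinearMap.adjoint_adjoint]
  have h1 : ‖(Submodule.orthogonalProjectionOnto S y₀ : E)‖ ≤ ‖(Submodule.orthogonalProjectionOnto S' x₀ : E)‖ := by
    have hmem : (y : E) ∈ (S' : Set E) ∩ sphere 0 1 :=
      ⟨y.2, by rw [mem_sphere_zero_iff_norm, hcoe']; exact hy1A⟩
    calc ‖(Submodule.orthogonalProjectionOnto S y₀ : E)‖
        ≤ ‖(Submodule.orthogonalProjectionOnto S (y : E) : E)‖ := hy₀min hmem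
      _ = ‖B y‖ := (hBy y).symm
      _ = ‖ContinuousLinearMap.adjoint A y‖ := by rw [hadj]
      _ ≤ ‖A ⟨x₀, hx₀C.1⟩‖ := hyleA
      _ = ‖(Submodule.orthogonalProjectionOnto S' x₀ : E)‖ := hAx _
  have h2 : ‖(Submodule.orthogonalProjectionOnto S' x₀ : E)‖ ≤ ‖(Submodule.orthogonalProjectionOnto S y₀ : E)‖ := by
    have hmem : (x : E) ∈ (S : Set E) ∩ sphere 0 1 :=
      ⟨x.2, by rw [mem_sphere_zero_iff_norm, hcoe]; exact hx1B⟩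
    calc ‖(Submodule.orthogonalProjectionOnto S' x₀ : E)‖
        ≤ ‖(Submodule.orthogonalProjectionOnto S' (x : E) : E)‖ := hx₀min hmem
      _ = ‖A x‖ := (hAx x).symm
      _ = ‖ContinuousLinearMap.adjoint B x‖ := by rw [hadj']
      _ ≤ ‖B ⟨y₀, hy₀C.1⟩‖ := hxleB
      _ = ‖(Submodule.orthogonalProjectionOnto S y₀ : E)‖ := hBy _
  have hmm : ‖(Submodule.orthogonalProjectionOnto S' x₀ : E)‖ = ‖(Submodule.orthogonalProjectionOnto S y₀ : E)‖ :=
    le_antisymm h2 h1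
  rw [sup_infDist_eq S S' hS'ne x₀ hx₀C (fun z hz => hx₀min hz),
    sup_infDist_eq S' S hSne y₀ hy₀C (fun z hz => hy₀min hz), hmm]
end

section
/- Let (e₁,…,e_d) be an orthonormal basis of R^d and g₁,…,g_b orthonormal vectors with ‖eᵢ − gᵢ‖ ≤ ε for i ≤ b. Let F = span(g₁,…,g_b). Then for each j ∈ {b+1,…,d}, the orthogonal projection of e_j onto F has norm at most √b·ε, i.e., ‖e_j − P_{F^⊥}(e_j)‖ ≤ √b·ε. -/
open scoped RealInnerProductSpace


/-- with `(e₁,…,e_d)` an orthonormal basis of `ℝ^d`, `g₁,…,g_b` orthonormal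
vectors with `‖eᵢ − gᵢ‖ ≤ ε` for `i ≤ b`, and `F = span(g₁,…,g_b)`, for each `j > b` the
projection of `e_j` onto `F` is small: `‖e_j − P_{F^⊥}(e_j)‖ ≤ √b·ε`. -/
theorem dist_to_orthogonal_complement_le
    (d b : ℕ) (hbd : b ≤ d) (ε : ℝ) (hε : 0 ≤ ε)
    (e : OrthonormalBasis (Fin d) ℝ (EuclideanSpace ℝ (Fin d)))
    (g : Fin b → EuclideanSpace ℝ (Fin d)) (hg : Orthonormal ℝ g)
    (hclose : ∀ i : Fin b, ‖e (Fin.castLE hbd i) - g i‖ ≤ ε)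
    (F : Submodule ℝ (EuclideanSpace ℝ (Fin d)))
    (hF : F = Submodule.span ℝ (Set.range g)) :
    ∀ j : Fin d, b ≤ (j : ℕ) →
      ‖e j - (Submodule.orthogonalProjectionOnto Fᗮ (e j) : EuclideanSpace ℝ (Fin d))‖
        ≤ Real.sqrt b * ε := by
  classical
  intro j hj
  -- orthonormal basis of F
  have hFspan : Submodule.span ℝ ((Finset.univ.image g : Finset _) : Set _) = F := by
    rw [hF]; congr 1; simp
  let β : OrthonormalBasis (Finset.univ : Finset (Fin b)) ℝ F :=
    (OrthonormalBasis.span hg Finset.univ).map (LinearIsometryEquiv.ofEq _ _ hFspan)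
  have hβ : ∀ i : (Finset.univ : Finset (Fin b)), (β i : EuclideanSpace ℝ (Fin d)) = g i := by
    intro i
    simp [β]
  -- the difference equals the projection onto F
  have hkey : e j - (Submodule.orthogonalProjectionOnto Fᗮ (e j) : EuclideanSpace ℝ (Fin d))
      = (Submodule.orthogonalProjectionOnto F (e j) : EuclideanSpace ℝ (Fin d)) := by
    exact sub_eq_of_eq_add (Submodule.starProjection_add_starProjection_orthogonal (K := F) (e j)).symm
  rw [hkey]
  -- inner products with g i are small
  have hinner : ∀ i : Fin b, abs (⟪g i, e j⟫) ≤ ε := by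
    intro i
    have hne : Fin.castLE hbd i ≠ j := by
      intro h
      have h2 : ((Fin.castLE hbd i : Fin d) : ℕ) = (j : ℕ) := by rw [h]
      have h3 : (i : ℕ) < b := i.isLt
      simp [Fin.coe_castLE] at h2
      omega
    have h0 : ⟪e (Fin.castLE hbd i), e j⟫ = 0 := e.orthonormal.2 hne
    have : ⟪g i, e j⟫ = ⟪g i - e (Fin.castLE hbd i), e j⟫ := by
      rw [inner_sub_left, h0, sub_zero]
    rw [this]
    calc abs (⟪g i - e (Fin.castLE hbd i), e j⟫)
        ≤ ‖g i - e (Fin.castLE hbd i)‖ * ‖e j‖ := abs_real_inner_le_norm _ _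
      _ = ‖e (Fin.castLE hbd i) - g i‖ := by rw [e.orthonormal.1 j, norm_sub_rev, mul_one]
      _ ≤ ε := hclose i
  -- norm via coordinates
  have hnorm : ‖(Submodule.orthogonalProjectionOnto F (e j) : EuclideanSpace ℝ (Fin d))‖
      = Real.sqrt (∑ i : (Finset.univ : Finset (Fin b)), ⟪g i, e j⟫ ^ 2) := by
    rw [Submodule.norm_coe]
    rw [← β.repr.norm_map (Submodule.orthogonalProjectionOnto F (e j))]
    rw [EuclideanSpace.norm_eq]
    congr 1
    refine Finset.sum_congr rfl fun i _ => ?_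
    rw [β.repr_apply_apply, Real.norm_eq_abs, sq_abs]
    congr 1
    rw [show (⟪β i, Submodule.orthogonalProjectionOnto F (e j)⟫) = ⟪(β i : EuclideanSpace ℝ (Fin d)), e j⟫ from
      Submodule.inner_orthogonalProjectionOnto_eq_of_mem_left (K := F) (β i) (e j), hβ i]
  rw [hnorm]
  calc Real.sqrt (∑ i : (Finset.univ : Finset (Fin b)), ⟪g i, e j⟫ ^ 2)
      ≤ Real.sqrt (b * ε ^ 2) := by
        apply Real.sqrt_le_sqrt
        calc ∑ i : (Finset.univ : Finset (Fin b)), ⟪g i, e j⟫ ^ 2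
            ≤ ∑ _i : (Finset.univ : Finset (Fin b)), ε ^ 2 := by
              refine Finset.sum_le_sum fun i _ => ?_
              have := hinner i
              nlinarith [abs_nonneg (⟪g (i : Fin b), e j⟫), neg_abs_le (⟪g (i : Fin b), e j⟫), le_abs_self (⟪g (i : Fin b), e j⟫)]
          _ = b * ε ^ 2 := by
              rw [Finset.sum_const, nsmul_eq_mul]
              congr 1
              simp [Fintype.card_coe]
    _ = Real.sqrt b * ε := by
        rw [Real.sqrt_mul (by positivity), Real.sqrt_sq hε]
end

section
/- For any dimension d ≥ 2 and 0 < ε ≤ 1, the ε-covering number of the unit sphere S^{d−1} in R^d with respect to the Euclidean metric satisfies N(ε, S^{d−1}, ‖·‖₂) < √(πd/2) · (4/ε)^{d−1}. -/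
open Real Metric Set MeasureTheory ENNReal


/-- A compact set admits a finite maximal `ε`-separated subset: it is separated and
every point of the set is within `ε` of some point of it. -/
lemma exists_maximal_separated {E : Type*} [MetricSpace E] {A : Set E} (hA : IsCompact A)
    {ε : ℝ} (hε : 0 < ε) :
    ∃ s : Finset E, ↑s ⊆ A ∧ ((s : Set E).Pairwise fun a b => ε ≤ dist a b) ∧
      ∀ y ∈ A, ∃ a ∈ s, dist y a < ε := by
  classical
  obtain ⟨t, htfin, htcov⟩ := (totallyBounded_iff.mp hA.totallyBounded) (ε/2) (by linarith)
  set K := htfin.toFinset.card with hK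
  -- any separated finset inside A has card ≤ K
  have bound : ∀ s : Finset E, ↑s ⊆ A → ((s : Set E).Pairwise fun a b => ε ≤ dist a b) →
      s.card ≤ K := by
    intro s hsA hsep
    have hchoice : ∀ a ∈ s, ∃ c ∈ htfin.toFinset, a ∈ ball c (ε/2) := by
      intro a ha
      have := htcov (hsA ha)
      simp only [mem_iUnion, exists_prop] at this
      obtain ⟨c, hc, hac⟩ := this
      exact ⟨c, htfin.mem_toFinset.mpr hc, hac⟩
    choose f hf1 hf2 using hchoice
    apply Finset.card_le_card_of_injOn (fun a => if h : a ∈ s then f a h else a)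
    · intro a ha; have ha' : a ∈ s := ha; simp only [ha', dif_pos]; exact hf1 a ha'
    · intro a ha b hb hab
      simp only [Finset.mem_coe] at ha hb
      simp only [ha, hb, dif_pos] at hab
      by_contra hne
      have h1 := hf2 a ha
      have h2 := hf2 b hb
      rw [hab] at h1
      have : dist a b < ε := by
        calc dist a b ≤ dist a (f b hb) + dist (f b hb) b := dist_triangle _ _ _
        _ < ε/2 + ε/2 := by
            rw [mem_ball] at h1 h2
            rw [dist_comm (f b hb) b]; linarith [h1, h2]
        _ = ε := by ring
      exact absurd (hsep ha hb hne) (not_le.mpr this)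
  set P : ℕ → Prop := fun n => ∃ s : Finset E, ↑s ⊆ A ∧
    ((s : Set E).Pairwise fun a b => ε ≤ dist a b) ∧ s.card = n with hP
  have hP0 : P 0 := ⟨∅, by simp, by simp, rfl⟩
  have hPmax : P (Nat.findGreatest P K) := Nat.findGreatest_spec (Nat.zero_le K) hP0
  obtain ⟨s, hsA, hsep, hcard⟩ := hPmax
  refine ⟨s, hsA, hsep, ?_⟩
  intro y hy
  by_contra hno
  push_neg at hno
  have hys : y ∉ s := fun h => absurd (hno y h) (by simp [hε])
  have hsep' : ((insert y s : Finset E) : Set E).Pairwise fun a b => ε ≤ dist a b := by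
    haveI : Std.Symm (fun a b : E => ε ≤ dist a b) := ⟨fun a b h => by rwa [dist_comm]⟩
    rw [Finset.coe_insert, Set.pairwise_insert_of_symmetric]
    · exact ⟨hsep, fun b hb _ => hno b hb⟩
  have hcard' : (insert y s).card = Nat.findGreatest P K + 1 := by
    rw [Finset.card_insert_of_notMem hys, hcard]
  have hPn : P (Nat.findGreatest P K + 1) := by
    refine ⟨insert y s, ?_, hsep', hcard'⟩
    rw [Finset.coe_insert]
    exact Set.insert_subset hy hsA
  have hle : Nat.findGreatest P K + 1 ≤ K := by
    rw [← hcard']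
    exact bound _ (by rw [Finset.coe_insert]; exact Set.insert_subset hy hsA) hsep'
  exact Nat.findGreatest_is_greatest (Nat.lt_succ_self _) hle hPn


lemma card_le_vol (d : ℕ) (hd : 1 ≤ d) {x : ℝ} (hx0 : 0 < x) (hx1 : x ≤ 1/2)
    (s : Finset (EuclideanSpace ℝ (Fin d)))
    (hs : ↑s ⊆ Metric.sphere (0 : EuclideanSpace ℝ (Fin d)) 1)
    (hsep : (s : Set (EuclideanSpace ℝ (Fin d))).Pairwise fun a b => 2*x ≤ dist a b) :
    (s.card : ℝ) * x ^ d + (1 - x) ^ d ≤ (1 + x) ^ d := by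
  classical
  haveI : Nontrivial (EuclideanSpace ℝ (Fin d)) := by
    apply Module.nontrivial_of_finrank_pos (R := ℝ)
    rw [finrank_euclideanSpace_fin]; omega
  have hfr : Module.finrank ℝ (EuclideanSpace ℝ (Fin d)) = d := finrank_euclideanSpace_fin
  set V := volume (ball (0 : EuclideanSpace ℝ (Fin d)) 1) with hV
  have hnorm : ∀ a ∈ s, dist a (0 : EuclideanSpace ℝ (Fin d)) = 1 := fun a ha => hs ha
  have hdisj : (s : Set (EuclideanSpace ℝ (Fin d))).PairwiseDisjoint fun a => ball a x := by
    intro a ha b hb hab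
    exact ball_disjoint_ball (by linarith [hsep ha hb hab])
  set U := ⋃ a ∈ s, ball a x with hU
  have hUB : U ⊆ ball (0 : EuclideanSpace ℝ (Fin d)) (1 + x) := by
    intro y hy
    simp only [hU, mem_iUnion, exists_prop] at hy
    obtain ⟨a, ha, hya⟩ := hy
    rw [mem_ball] at hya ⊢
    calc dist y 0 ≤ dist y a + dist a 0 := dist_triangle _ _ _
      _ < x + 1 := by rw [hnorm a ha]; linarith
      _ = 1 + x := by ring
  have hUd : Disjoint U (closedBall (0 : EuclideanSpace ℝ (Fin d)) (1 - x)) := by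
    rw [Set.disjoint_left]
    intro y hy hy'
    simp only [hU, mem_iUnion, exists_prop] at hy
    obtain ⟨a, ha, hya⟩ := hy
    rw [mem_ball] at hya
    rw [mem_closedBall] at hy'
    have h1 := hnorm a ha
    have : (1 : ℝ) ≤ dist a y + dist y 0 := by
      rw [← h1]; exact dist_triangle a y 0
    rw [dist_comm a y] at this
    linarith
  have hUvol : volume U = (s.card : ℝ≥0∞) * (ENNReal.ofReal (x ^ d) * V) := by
    rw [hU, measure_biUnion_finset hdisj (fun a _ => measurableSet_ball)]
    rw [Finset.sum_congr rfl (fun a _ => by rw [Measure.addHaar_ball volume a hx0.le, hfr])]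
    rw [Finset.sum_const, nsmul_eq_mul]
  have hCB : volume (closedBall (0 : EuclideanSpace ℝ (Fin d)) (1 - x)) = ENNReal.ofReal ((1 - x) ^ d) * V := by
    rw [Measure.addHaar_closedBall volume _ (by linarith : (0:ℝ) ≤ 1 - x), hfr]
  have hBB : volume (ball (0 : EuclideanSpace ℝ (Fin d)) (1 + x)) = ENNReal.ofReal ((1 + x) ^ d) * V := by
    rw [Measure.addHaar_ball volume _ (by linarith : (0:ℝ) ≤ 1 + x), hfr]
  have hmain : ((s.card : ℝ≥0∞) * ENNReal.ofReal (x ^ d) + ENNReal.ofReal ((1 - x) ^ d)) * V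
      ≤ ENNReal.ofReal ((1 + x) ^ d) * V := by
    rw [add_mul, mul_assoc, ← hUvol, ← hCB, ← hBB, ← measure_union hUd measurableSet_closedBall]
    exact measure_mono (Set.union_subset hUB (closedBall_subset_ball (by linarith)))
  rw [ENNReal.mul_le_mul_iff_left (measure_ball_pos volume _ one_pos).ne' measure_ball_lt_top.ne]
    at hmain
  have h2 : ENNReal.ofReal ((s.card : ℝ) * x ^ d + (1 - x) ^ d)
      ≤ ENNReal.ofReal ((1 + x) ^ d) := by
    rw [ENNReal.ofReal_add (by positivity) (pow_nonneg (by linarith) d), ENNReal.ofReal_mul (by positivity),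
      ENNReal.ofReal_natCast]
    exact hmain
  rwa [ENNReal.ofReal_le_ofReal_iff (by positivity)] at h2

lemma poly_bound (d : ℕ) {x : ℝ} (hx0 : 0 < x) (hx1 : x ≤ 1/2) :
    (1+x)^d - (1-x)^d ≤ 2*x*((3/2:ℝ)^d - (1/2:ℝ)^d) := by
  have h1 : (1+x)^d = ∑ k ∈ Finset.range (d+1), x^k * (d.choose k : ℝ) := by
    rw [add_comm, add_pow]; simp
  have h2 : (1-x)^d = ∑ k ∈ Finset.range (d+1), (-x)^k * (d.choose k : ℝ) := by
    rw [show (1-x) = -x + 1 by ring, add_pow]; simp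
  have h3 : (3/2:ℝ)^d = ∑ k ∈ Finset.range (d+1), (1/2:ℝ)^k * (d.choose k : ℝ) := by
    rw [show (3/2:ℝ) = 1/2 + 1 by norm_num, add_pow]; simp
  have h4 : (1/2:ℝ)^d = ∑ k ∈ Finset.range (d+1), (-(1/2):ℝ)^k * (d.choose k : ℝ) := by
    conv_lhs => rw [show (1/2:ℝ) = -(1/2) + 1 by norm_num]
    rw [add_pow]; simp
  rw [h1, h2, h3, h4, ← Finset.sum_sub_distrib, ← Finset.sum_sub_distrib, Finset.mul_sum]
  apply Finset.sum_le_sum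
  intro k _
  rcases Nat.even_or_odd k with he | ho
  · rw [he.neg_pow, he.neg_pow]; simp
  · rw [ho.neg_pow, ho.neg_pow]
    obtain ⟨m, rfl⟩ := ho
    have hxle : x ^ (2*m) ≤ (1/2:ℝ) ^ (2*m) := pow_le_pow_left₀ hx0.le hx1 _
    have hC : (0:ℝ) ≤ (d.choose (2*m+1) : ℝ) := Nat.cast_nonneg _
    rw [pow_succ, pow_succ]
    nlinarith [mul_le_mul_of_nonneg_right hxle (mul_nonneg hx0.le hC)]

lemma three_pow_le (d : ℕ) (hd : 3 ≤ d) : (3:ℝ)^d ≤ 2 * 4^(d-1) := by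
  induction d, hd using Nat.le_induction with
  | base => norm_num
  | succ n hn ih =>
    have h4 : n + 1 - 1 = n - 1 + 1 := by omega
    rw [pow_succ, h4, pow_succ]
    nlinarith [pow_pos (by norm_num : (0:ℝ) < 4) (n-1), pow_pos (by norm_num : (0:ℝ) < 3) n]

lemma numeric_bound (d : ℕ) (hd : 3 ≤ d) :
    2 * ((3/2:ℝ)^d - (1/2:ℝ)^d) < Real.sqrt (Real.pi * d / 2) * 2^(d-1) := by
  have hd3 : (3:ℝ) ≤ (d:ℝ) := by exact_mod_cast hd
  have hsq : (2:ℝ) < Real.sqrt (Real.pi * d / 2) := by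
    have h4' : Real.sqrt 4 < Real.sqrt (Real.pi * d / 2) := by
      apply Real.sqrt_lt_sqrt (by norm_num)
      nlinarith [Real.pi_gt_three]
    rwa [show (4:ℝ) = 2^2 by norm_num, Real.sqrt_sq (by norm_num : (0:ℝ) ≤ 2)] at h4'
  have h1 : (3/2:ℝ)^d = 3^d / 2^d := by rw [div_pow]
  have h2 : (1/2:ℝ)^d = 1 / 2^d := by rw [div_pow]; norm_num
  have h3 : (3:ℝ)^d ≤ 2 * 4^(d-1) := three_pow_le d hd
  have h2d : (0:ℝ) < 2^d := by positivity
  have hdd : d = (d-1) + 1 := by omega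
  have h4 : (4:ℝ)^(d-1) = 2^(d-1) * 2^(d-1) := by
    rw [show (4:ℝ) = 2*2 by norm_num, mul_pow]
  have h2d' : (2:ℝ)^d = 2^(d-1) * 2 := by conv_lhs => rw [hdd, pow_succ]
  have e1 : (2:ℝ) * (2^(d-1) * 2^d) = 4 * 4^(d-1) := by rw [h2d', h4]; ring
  have hlt := mul_lt_mul_of_pos_right hsq (by positivity : (0:ℝ) < 2^(d-1) * 2^d)
  have key : 2 * ((3:ℝ)^d - 1) < Real.sqrt (Real.pi * d / 2) * 2^(d-1) * 2^d := by
    calc 2 * ((3:ℝ)^d - 1) < 2 * (2^(d-1) * 2^d) := by linarith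
      _ < Real.sqrt (Real.pi * d / 2) * (2^(d-1) * 2^d) := hlt
      _ = Real.sqrt (Real.pi * d / 2) * 2^(d-1) * 2^d := by ring
  rw [h1, h2, div_sub_div_same, mul_div_assoc', div_lt_iff₀ h2d]
  linarith [key]


lemma exp_I_dist (θ φ : ℝ) :
    ‖Complex.exp (θ * Complex.I) - Complex.exp (φ * Complex.I)‖ ≤ |θ - φ| := by
  have h1 : Complex.exp ((θ:ℂ) * Complex.I) - Complex.exp ((φ:ℂ) * Complex.I)
      = ((Real.cos θ - Real.cos φ : ℝ) : ℂ) + ((Real.sin θ - Real.sin φ : ℝ) : ℂ) * Complex.I := by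
    rw [Complex.exp_mul_I, Complex.exp_mul_I]
    rw [← Complex.ofReal_cos, ← Complex.ofReal_sin, ← Complex.ofReal_cos, ← Complex.ofReal_sin]
    push_cast
    ring
  rw [h1]
  have h2 : ‖(((Real.cos θ - Real.cos φ : ℝ) : ℂ)
      + ((Real.sin θ - Real.sin φ : ℝ) : ℂ) * Complex.I)‖
      = Real.sqrt ((Real.cos θ - Real.cos φ)^2 + (Real.sin θ - Real.sin φ)^2) := by
    rw [Complex.norm_def, Complex.normSq_apply]
    simp [pow_two, Complex.cos_ofReal_re, Complex.sin_ofReal_re]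
  rw [h2, ← Real.sqrt_sq_eq_abs]
  apply Real.sqrt_le_sqrt
  have hc := Real.cos_sub θ φ
  have hb := Real.one_sub_sq_div_two_le_cos (x := θ - φ)
  nlinarith [Real.sin_sq_add_cos_sq θ, Real.sin_sq_add_cos_sq φ]

lemma circle_cover {ε : ℝ} (hε0 : 0 < ε) (hε1 : ε ≤ 1) :
    ∃ s : Finset (EuclideanSpace ℝ (Fin 2)),
      (Metric.sphere (0 : EuclideanSpace ℝ (Fin 2)) 1 ⊆ ⋃ c ∈ s, Metric.ball c ε) ∧
      (s.card : ℝ) ≤ π / ε + 1 := by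
  classical
  set iso := Complex.orthonormalBasisOneI.repr with hiso
  set n : ℕ := ⌊π / ε⌋₊ + 1 with hn
  have hn0 : 0 < n := Nat.succ_pos _
  have hnR : (0:ℝ) < n := by exact_mod_cast hn0
  have hπn : π / n < ε := by
    rw [div_lt_iff₀ hnR]
    have h1 : π / ε < n := by
      rw [hn]; push_cast; exact Nat.lt_floor_add_one _
    calc π = (π / ε) * ε := by field_simp
      _ < n * ε := by apply mul_lt_mul_of_pos_right h1 hε0
      _ = ε * n := by ring
  set f : ℕ → EuclideanSpace ℝ (Fin 2) :=
    fun j => iso (Complex.exp (((2 * π * j / n : ℝ) : ℂ) * Complex.I)) with hf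
  refine ⟨(Finset.range n).image f, ?_, ?_⟩
  · intro y hy
    set z := iso.symm y with hz
    have hzy : iso z = y := iso.apply_symm_apply y
    have habs : ‖z‖ = 1 := by
      rw [hz]
      rw [show ‖iso.symm y‖ = ‖y‖ from iso.symm.norm_map y]
      rwa [mem_sphere_zero_iff_norm] at hy
    set θ := z.arg with hθ
    have hzexp : z = Complex.exp ((θ:ℂ) * Complex.I) := by
      conv_lhs => rw [← Complex.norm_mul_exp_arg_mul_I z]
      rw [habs]; simp; rfl
    set k : ℤ := round (θ * n / (2 * π)) with hk
    set j : ℕ := (k % (n:ℤ)).toNat with hj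
    have hjn : j < n := by
      have h1 : k % (n:ℤ) < n := Int.emod_lt_of_pos k (by exact_mod_cast hn0)
      have h2 : 0 ≤ k % (n:ℤ) := Int.emod_nonneg k (by exact_mod_cast hn0.ne')
      omega
    have hjk : (j:ℤ) = k % (n:ℤ) := by
      rw [hj]
      exact Int.toNat_of_nonneg (Int.emod_nonneg k (by exact_mod_cast hn0.ne'))
    -- f j = exp(2πk/n * I) image
    set q : ℤ := k / (n:ℤ) with hq
    have hzq : (k:ℤ) = (j:ℤ) + (n:ℤ) * q := by
      rw [hjk]
      have h5 := Int.mul_ediv_add_emod k (n:ℤ)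
      rw [← hq] at h5
      linarith
    have hknq : (k:ℝ) = (j:ℝ) + (n:ℝ) * (q:ℝ) := by exact_mod_cast hzq
    have hexp_eq : Complex.exp (((2 * π * j / n : ℝ) : ℂ) * Complex.I)
        = Complex.exp (((2 * π * k / n : ℝ) : ℂ) * Complex.I) := by
      have harg : (2 * π * (k:ℝ) / n) = 2 * π * (j:ℝ) / n + q * (2 * π) := by
        field_simp [hknq]; ring_nf; linarith [hknq]
      rw [harg]
      push_cast
      rw [add_mul, Complex.exp_add]
      rw [show ((q:ℂ) * (2 * (π:ℂ))) * Complex.I = (q:ℂ) * (2 * (π:ℂ) * Complex.I) by ring]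
      rw [Complex.exp_int_mul_two_pi_mul_I]
      ring
    have habound : |θ - 2 * π * (k:ℝ) / n| ≤ π / n := by
      have hround := abs_sub_round (θ * n / (2 * π))
      have heq : θ - 2 * π * (k:ℝ) / n = (2 * π / n) * (θ * n / (2 * π) - k) := by
        field_simp
      rw [heq, abs_mul, abs_of_pos (by positivity : (0:ℝ) < 2 * π / n)]
      calc 2 * π / n * |θ * n / (2 * π) - k| ≤ 2 * π / n * (1/2) := by
            apply mul_le_mul_of_nonneg_left hround (by positivity)
        _ = π / n := by ring
    have hdist : dist y (f j) < ε := by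
      rw [← hzy]
      show dist (iso z) (iso (Complex.exp (((2 * π * j / n : ℝ) : ℂ) * Complex.I))) < ε
      rw [iso.dist_map, hexp_eq, Complex.dist_eq, hzexp]
      calc ‖(Complex.exp ((θ:ℂ) * Complex.I)
            - Complex.exp (((2 * π * k / n : ℝ) : ℂ) * Complex.I))‖
          ≤ |θ - 2 * π * (k:ℝ) / n| := exp_I_dist _ _
        _ ≤ π / n := habound
        _ < ε := hπn
    rw [mem_iUnion]
    refine ⟨f j, ?_⟩
    rw [mem_iUnion]
    refine ⟨Finset.mem_image_of_mem f (Finset.mem_range.mpr hjn), ?_⟩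
    rwa [mem_ball]
  · calc ((Finset.image f (Finset.range n)).card : ℝ)
        ≤ (n : ℝ) := by
          exact_mod_cast Finset.card_image_le.trans (Finset.card_range n).le
      _ = (⌊π / ε⌋₊ : ℝ) + 1 := by rw [hn]; push_cast; ring
      _ ≤ π / ε + 1 := by
          have := Nat.floor_le (by positivity : (0:ℝ) ≤ π / ε)
          linarith
/-- for `d ≥ 2` and `0 < ε ≤ 1`, the sphere `S^{d−1} ⊆ ℝ^d` can be covered
by fewer than `√(πd/2)·(4/ε)^{d−1}` open Euclidean balls of radius `ε`; i.e. the
covering number satisfies `N(ε, S^{d−1}, ‖·‖₂) < √(πd/2)·(4/ε)^{d−1}`. -/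
theorem sphere_covering_number_lt
    (d : ℕ) (hd : 2 ≤ d) (ε : ℝ) (hε0 : 0 < ε) (hε1 : ε ≤ 1) :
    ∃ s : Finset (EuclideanSpace ℝ (Fin d)),
      (Metric.sphere (0 : EuclideanSpace ℝ (Fin d)) 1 ⊆ ⋃ c ∈ s, Metric.ball c ε) ∧
      (s.card : ℝ) < Real.sqrt (π * d / 2) * (4 / ε) ^ (d - 1) := by
  rcases Nat.lt_or_ge d 3 with h3 | h3
  · -- d = 2 : explicit construction on the circle
    have hd2 : d = 2 := by omega
    subst hd2
    obtain ⟨s, hcov, hcard⟩ := circle_cover hε0 hε1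
    refine ⟨s, hcov, ?_⟩
    have hsqrt : (13/8 : ℝ) < Real.sqrt (π * 2 / 2) := by
      rw [Real.lt_sqrt (by norm_num)]
      nlinarith [Real.pi_gt_three]
    have hεinv : (1:ℝ) ≤ 1 / ε := by
      rw [le_div_iff₀ hε0]; linarith
    have hpow : (4 / ε : ℝ) ^ (2 - 1) = 4 / ε := pow_one _
    rw [hpow]
    calc (s.card : ℝ) ≤ π / ε + 1 := hcard
      _ ≤ π / ε + 1 / ε := by linarith
      _ = (π + 1) * (1 / ε) := by ring
      _ < (13/8 * 4) * (1 / ε) := by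
          apply mul_lt_mul_of_pos_right _ (by positivity)
          nlinarith [Real.pi_lt_d2]
      _ ≤ Real.sqrt (π * 2 / 2) * 4 * (1 / ε) := by
          apply mul_le_mul_of_nonneg_right _ (by positivity)
          nlinarith [hsqrt]
      _ = Real.sqrt (π * 2 / 2) * (4 / ε) := by
          ring
  · -- d ≥ 3 : volume packing argument
    obtain ⟨s, hsA, hsep, hnet⟩ :=
      exists_maximal_separated (isCompact_sphere (0 : EuclideanSpace ℝ (Fin d)) 1) hε0
    refine ⟨s, ?_, ?_⟩
    · intro y hy
      obtain ⟨a, ha, hya⟩ := hnet y hy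
      rw [Set.mem_iUnion]
      exact ⟨a, Set.mem_iUnion.mpr ⟨ha, Metric.mem_ball.mpr hya⟩⟩
    · set x : ℝ := ε / 2 with hx
      have hx0 : 0 < x := by rw [hx]; linarith
      have hx1 : x ≤ 1/2 := by rw [hx]; linarith
      have hsep' : (s : Set (EuclideanSpace ℝ (Fin d))).Pairwise
          fun a b => 2 * x ≤ dist a b := by
        intro a ha b hb hab
        have := hsep ha hb hab
        rw [hx]; linarith
      have hvol := card_le_vol d (by omega) hx0 hx1 s hsA hsep'
      have hpoly := poly_bound d hx0 hx1
      have hnum := numeric_bound d h3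
      have hxd : (0:ℝ) < x ^ d := pow_pos hx0 d
      have hchain : (s.card : ℝ) * x ^ d
          < Real.sqrt (π * d / 2) * 2 ^ (d-1) * x := by
        have h1 : (s.card : ℝ) * x ^ d ≤ (1 + x)^d - (1 - x)^d := by linarith
        have h2 : (1 + x)^d - (1 - x)^d ≤ 2 * x * ((3/2:ℝ)^d - (1/2:ℝ)^d) := hpoly
        nlinarith [mul_lt_mul_of_pos_left hnum hx0]
      have hRx : Real.sqrt (π * d / 2) * (4 / ε) ^ (d - 1) * x ^ d
          = Real.sqrt (π * d / 2) * 2 ^ (d-1) * x := by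
        have hdd : d = (d - 1) + 1 := by omega
        have hxs : x ^ d = x ^ (d-1) * x := by conv_lhs => rw [hdd, pow_succ]
        have h42 : (4 / ε) * x = 2 := by rw [hx]; field_simp; ring
        calc Real.sqrt (π * d / 2) * (4 / ε) ^ (d - 1) * x ^ d
            = Real.sqrt (π * d / 2) * ((4 / ε) * x) ^ (d-1) * x := by
              rw [hxs, mul_pow]; ring
          _ = Real.sqrt (π * d / 2) * 2 ^ (d-1) * x := by rw [h42]
      have hfinal : (s.card : ℝ) * x ^ d
          < Real.sqrt (π * d / 2) * (4 / ε) ^ (d - 1) * x ^ d := by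
        rw [hRx]; exact hchain
      exact lt_of_mul_lt_mul_right hfinal hxd.le |>.trans_le le_rfl
end

section
/- Let g : U → R be continuously differentiable on an open subset U of R^k, let x₀ ∈ U and v be a unit vector with |⟨∇g(x), v⟩| ≥ r > 0 for all x in a ball B of radius L around x₀. Then for every 0 < l ≤ L, every t with ‖t − x₀‖ ≤ L/2, and every constant c ∈ R, the integral ∫_{−l/2}^{l/2} |g(t + y v) − c|² dy ≥ r²·l³/24. -/
open MeasureTheory

lemma aux_integral_bound (a r : ℝ) (ha : 0 < a) (hr : 0 < r) (φ h : ℝ → ℝ)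
    (hder : ∀ y ∈ Set.Icc (-a) a, HasDerivAt φ (h y) y)
    (hh : ∀ y ∈ Set.Icc (-a) a, r ≤ h y) (c : ℝ) :
    r ^ 2 * a ^ 3 / 3 ≤ ∫ y in (-a)..a, |φ y - c| ^ 2 := by
  have hcont : ContinuousOn φ (Set.Icc (-a) a) := fun y hy =>
    (hder y hy).continuousAt.continuousWithinAt
  -- monotonicity of ψ = φ - r y
  set ψ : ℝ → ℝ := fun y => φ y - r * y with hψ
  have hψder : ∀ y ∈ Set.Icc (-a) a, HasDerivAt ψ (h y - r) y := by
    intro y hy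
    have := (hder y hy).sub ((hasDerivAt_id y).const_mul r)
    exact this.congr_deriv (by ring)
  have hmono : MonotoneOn ψ (Set.Icc (-a) a) := by
    apply monotoneOn_of_deriv_nonneg (convex_Icc _ _)
    · exact fun y hy => ((hψder y hy).continuousAt).continuousWithinAt
    · intro y hy
      rw [interior_Icc] at hy
      exact ((hψder y (Set.Ioo_subset_Icc_self hy)).differentiableAt).differentiableWithinAt
    · intro y hy
      rw [interior_Icc] at hy
      rw [(hψder y (Set.Ioo_subset_Icc_self hy)).deriv]
      linarith [hh y (Set.Ioo_subset_Icc_self hy)]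
  have key : ∀ y ∈ Set.Icc (0:ℝ) a, 2 * r * y ≤ φ y - φ (-y) := by
    intro y hy
    obtain ⟨hy0, hya⟩ := hy
    have h1 : (-y) ∈ Set.Icc (-a) a := ⟨by linarith, by linarith⟩
    have h2 : y ∈ Set.Icc (-a) a := ⟨by linarith, hya⟩
    have := hmono h1 h2 (by linarith)
    simp only [hψ] at this
    nlinarith
  -- integrability
  have hfc : ContinuousOn (fun y => |φ y - c| ^ 2) (Set.Icc (-a) a) := by
    apply ContinuousOn.pow
    exact (hcont.sub continuousOn_const).abs
  have hint1 : IntervalIntegrable (fun y => |φ y - c| ^ 2) volume (-a) 0 := by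
    apply ContinuousOn.intervalIntegrable
    exact hfc.mono (by rw [Set.uIcc_of_le (by linarith)]; exact Set.Icc_subset_Icc le_rfl (by linarith))
  have hint2 : IntervalIntegrable (fun y => |φ y - c| ^ 2) volume 0 a := by
    apply ContinuousOn.intervalIntegrable
    exact hfc.mono (by rw [Set.uIcc_of_le (by linarith)]; exact Set.Icc_subset_Icc (by linarith) le_rfl)
  have hsplit : (∫ y in (-a)..a, |φ y - c| ^ 2) =
      (∫ y in (0:ℝ)..a, |φ (-y) - c| ^ 2) + ∫ y in (0:ℝ)..a, |φ y - c| ^ 2 := by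
    rw [← intervalIntegral.integral_add_adjacent_intervals hint1 hint2]
    congr 1
    rw [intervalIntegral.integral_comp_neg (fun y => |φ y - c| ^ 2)]
    norm_num
  have hint3 : IntervalIntegrable (fun y => |φ (-y) - c| ^ 2) volume 0 a := by
    apply ContinuousOn.intervalIntegrable
    apply ContinuousOn.pow
    apply ContinuousOn.abs
    apply ContinuousOn.sub _ continuousOn_const
    apply hcont.comp continuousOn_neg
    intro y hy
    rw [Set.uIcc_of_le ha.le, Set.mem_Icc] at hy
    exact Set.mem_Icc.mpr ⟨by linarith [hy.2], by linarith [hy.1]⟩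
  have hpt : ∀ y ∈ Set.Icc (0:ℝ) a,
      2 * r ^ 2 * y ^ 2 ≤ |φ (-y) - c| ^ 2 + |φ y - c| ^ 2 := by
    intro y hy
    have hk := key y hy
    have h1 : |φ (-y) - c| ^ 2 = (φ (-y) - c) ^ 2 := sq_abs _
    have h2 : |φ y - c| ^ 2 = (φ y - c) ^ 2 := sq_abs _
    rw [h1, h2]
    have h3 : (2 * r * y) ^ 2 ≤ (φ y - φ (-y)) ^ 2 := by
      nlinarith [mul_nonneg (mul_nonneg (by norm_num : (0:ℝ) ≤ 2) hr.le) hy.1]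
    nlinarith [sq_nonneg (φ y - c + (φ (-y) - c)), h3]
  have hintlow : IntervalIntegrable (fun y => 2 * r ^ 2 * y ^ 2) volume 0 a := by
    apply Continuous.intervalIntegrable; continuity
  have hcomp : (∫ y in (0:ℝ)..a, 2 * r ^ 2 * y ^ 2) ≤
      ∫ y in (0:ℝ)..a, (|φ (-y) - c| ^ 2 + |φ y - c| ^ 2) := by
    apply intervalIntegral.integral_mono_on ha.le hintlow (hint3.add hint2)
    exact hpt
  have hval : (∫ y in (0:ℝ)..a, 2 * r ^ 2 * y ^ 2) = 2 * r ^ 2 * (a ^ 3 / 3) := by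
    rw [intervalIntegral.integral_const_mul]
    rw [integral_pow]
    norm_num
  rw [hsplit, ← intervalIntegral.integral_add hint3 hint2]
  rw [hval] at hcomp
  nlinarith [sq_nonneg r, pow_pos ha 3, sq_nonneg (r*a)]

/-- if `g` is continuously differentiable on an open set `U ⊆ ℝ^k`
containing the closed ball of radius `L` around `x₀`, `v` is a unit vector and
`|⟨∇g(x), v⟩| ≥ r > 0` on this ball, then for every `0 < l ≤ L`, every `t` with
`‖t − x₀‖ ≤ L/2` and every constant `c`,
`∫_{−l/2}^{l/2} |g(t + y·v) − c|² dy ≥ r²·l³/24`. -/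
theorem directional_nonconstancy_integral_lower_bound
    (k : ℕ) (U : Set (EuclideanSpace ℝ (Fin k))) (hU : IsOpen U)
    (g : EuclideanSpace ℝ (Fin k) → ℝ) (hg : ContDiffOn ℝ 1 g U)
    (x₀ : EuclideanSpace ℝ (Fin k)) (L r : ℝ) (hL : 0 < L) (hr : 0 < r)
    (hball : Metric.closedBall x₀ L ⊆ U)
    (v : EuclideanSpace ℝ (Fin k)) (hv : ‖v‖ = 1)
    (hgrad : ∀ x ∈ Metric.closedBall x₀ L, r ≤ |(inner ℝ (gradient g x) v : ℝ)|) :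
    ∀ l : ℝ, 0 < l → l ≤ L → ∀ t : EuclideanSpace ℝ (Fin k), ‖t - x₀‖ ≤ L / 2 →
      ∀ c : ℝ, r ^ 2 * l ^ 3 / 24 ≤ ∫ y in (-(l / 2))..(l / 2), |g (t + y • v) - c| ^ 2 := by
  intro l hl hlL t ht c
  set a : ℝ := l / 2 with ha_def
  have ha : 0 < a := by positivity
  -- points on the segment lie in the ball
  have hmem : ∀ y ∈ Set.Icc (-a) a, t + y • v ∈ Metric.closedBall x₀ L := by
    intro y hy
    rw [Metric.mem_closedBall, dist_eq_norm]
    have : t + y • v - x₀ = (t - x₀) + y • v := by abel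
    rw [this]
    have h1 : ‖y • v‖ = |y| := by rw [norm_smul, hv, Real.norm_eq_abs, mul_one]
    have h2 : |y| ≤ a := abs_le.mpr ⟨hy.1, hy.2⟩
    calc ‖(t - x₀) + y • v‖ ≤ ‖t - x₀‖ + ‖y • v‖ := norm_add_le _ _
      _ ≤ L / 2 + a := by rw [h1]; linarith
      _ ≤ L := by simp only [ha_def]; linarith
  have hmemU : ∀ y ∈ Set.Icc (-a) a, t + y • v ∈ U := fun y hy => hball (hmem y hy)
  -- derivative of φ
  set φ : ℝ → ℝ := fun y => g (t + y • v) with hφ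
  set h : ℝ → ℝ := fun y => (inner ℝ (gradient g (t + y • v)) v : ℝ) with hh_def
  have hinner : ∀ x : EuclideanSpace ℝ (Fin k),
      (inner ℝ (gradient g x) v : ℝ) = fderiv ℝ g x v := by
    intro x
    rw [gradient]
    exact InnerProductSpace.toDual_symm_apply
  have hder : ∀ y ∈ Set.Icc (-a) a, HasDerivAt φ (h y) y := by
    intro y hy
    have hdiff : DifferentiableAt ℝ g (t + y • v) :=
      (hg.differentiableOn one_ne_zero).differentiableAt (hU.mem_nhds (hmemU y hy))
    have hγ : HasDerivAt (fun y : ℝ => t + y • v) v y := by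
      simpa using ((hasDerivAt_id y).smul_const v).const_add t
    have := (hdiff.hasFDerivAt).comp_hasDerivAt y hγ
    exact this.congr_deriv (hinner _).symm
  have habs : ∀ y ∈ Set.Icc (-a) a, r ≤ |h y| := fun y hy => hgrad _ (hmem y hy)
  -- continuity of h
  have hhc : ContinuousOn h (Set.Icc (-a) a) := by
    have hf : ContinuousOn (fun x => fderiv ℝ g x) U :=
      hg.continuousOn_fderiv_of_isOpen hU le_rfl
    have hγc : Continuous (fun y : ℝ => t + y • v) := by continuity
    have : ContinuousOn (fun y => fderiv ℝ g (t + y • v)) (Set.Icc (-a) a) :=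
      hf.comp hγc.continuousOn hmemU
    have := (ContinuousLinearMap.apply ℝ ℝ v).continuous.comp_continuousOn this
    simp only [hh_def]
    convert this using 1
    funext y
    simp [hinner, ContinuousLinearMap.apply]
  -- sign dichotomy
  have hsign : (∀ y ∈ Set.Icc (-a) a, r ≤ h y) ∨ (∀ y ∈ Set.Icc (-a) a, h y ≤ -r) := by
    by_contra hcon
    push_neg at hcon
    obtain ⟨⟨y₁, hy₁, hy₁'⟩, ⟨y₂, hy₂, hy₂'⟩⟩ := hcon
    have hv1 : h y₁ ≤ -r := by
      rcases (le_abs'.mp (habs y₁ hy₁)) with h' | h'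
      · linarith
      · linarith
    have hv2 : r ≤ h y₂ := by
      rcases (le_abs'.mp (habs y₂ hy₂)) with h' | h'
      · linarith
      · linarith
    have hsub : Set.uIcc y₁ y₂ ⊆ Set.Icc (-a) a := Set.uIcc_subset_Icc hy₁ hy₂
    have hivt := intermediate_value_uIcc (hhc.mono hsub)
    have h0 : (0:ℝ) ∈ Set.uIcc (h y₁) (h y₂) := by
      rw [Set.uIcc_of_le (by linarith)]
      constructor <;> linarith
    obtain ⟨z, hz, hz0⟩ := hivt h0
    have := habs z (hsub hz)
    rw [hz0] at this
    simp at this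
    linarith
  have hgoal : r ^ 2 * a ^ 3 / 3 ≤ ∫ y in (-a)..a, |φ y - c| ^ 2 := by
    rcases hsign with hpos | hneg
    · exact aux_integral_bound a r ha hr φ h hder hpos c
    · have := aux_integral_bound a r ha hr (fun y => -φ y) (fun y => -h y)
        (fun y hy => (hder y hy).neg)
        (fun y hy => by show r ≤ -h y; linarith [hneg y hy]) (-c)
      calc r ^ 2 * a ^ 3 / 3 ≤ ∫ y in (-a)..a, |-φ y - -c| ^ 2 := this
        _ = ∫ y in (-a)..a, |φ y - c| ^ 2 := by
            apply intervalIntegral.integral_congr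
            intro y _
            show |-φ y - -c| ^ 2 = |φ y - c| ^ 2
            rw [show -φ y - -c = -(φ y - c) by ring, abs_neg]
  have : r ^ 2 * l ^ 3 / 24 = r ^ 2 * a ^ 3 / 3 := by
    rw [ha_def]; ring
  rw [this]
  exact hgoal
end
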